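/- arXiv:1304.0237 — 2 statements merged into one kernel-verified Lean document; each statement's English description precedes it below -/
import Mathlib

section
/- For P < n and all m ≥ 1, the Macaulay operator satisfies (D_m − P)^{<m>} = D_{m+1} − (nP − P(P−1)/2), where D_k = C(k+n-1, k). -/
/-- `MacaulayRep m c J k` says that `c = C(k m, m) + ⋯ + C(k J, J)` is the `m`-th
Macaulay representation of `c` (top entries `k m > ⋯ > k J ≥ J > 0`). -/
def MacaulayRep (m c J : ℕ) (k : ℕ → ℕ) : Prop :=
  0 < J ∧ J ≤ m ∧ StrictMonoOn k (Set.Icc J m) ∧ J ≤ k J ∧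
    c = ∑ j ∈ Finset.Icc J m, (k j).choose j

/-- `MacaulayStep s x y` says that `y = x^{<s>}`, the Macaulay operator in degree `s`
applied to `x`. -/
def MacaulayStep (s x y : ℕ) : Prop :=
  ∃ J k, MacaulayRep s x J k ∧ y = ∑ j ∈ Finset.Icc J s, (k j + 1).choose (j + 1)


lemma rep_le_self {J m : ℕ} {k : ℕ → ℕ} (hmono : StrictMonoOn k (Set.Icc J m)) (hJk : J ≤ k J) :
    ∀ j, J ≤ j → j ≤ m → j ≤ k j := by
  intro j hJj hjm
  induction j with
  | zero => exact Nat.zero_le _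
  | succ i ih =>
    by_cases hJi : J = i + 1
    · exact hJi ▸ hJk
    · have hJi' : J ≤ i := by omega
      have h1 : i ≤ k i := ih hJi' (by omega)
      have h2 : k i < k (i+1) := hmono ⟨hJi', by omega⟩ ⟨by omega, hjm⟩ (by omega)
      omega

lemma rep_lt : ∀ {m c J : ℕ} {k : ℕ → ℕ}, MacaulayRep m c J k → c < (k m + 1).choose m := by
  intro m
  induction m with
  | zero => intro c J k h; obtain ⟨h1, h2, _⟩ := h; omega
  | succ t ih =>
    intro c J k h
    obtain ⟨hJ0, hJm, hmono, hJk, hc⟩ := h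
    have hkm : t + 1 ≤ k (t+1) := rep_le_self hmono hJk (t+1) hJm le_rfl
    by_cases hJt : J = t + 1
    · subst hJt
      rw [Finset.Icc_self, Finset.sum_singleton] at hc
      rw [hc]
      have hp : 0 < (k (t+1)).choose t := Nat.choose_pos (by omega)
      have hpas := Nat.choose_succ_succ (k (t+1)) t
      simp only [Nat.succ_eq_add_one] at hpas
      omega
    · have hJt' : J ≤ t := by omega
      rw [Finset.sum_Icc_succ_top (by omega)] at hc
      have h' : MacaulayRep t (∑ j ∈ Finset.Icc J t, (k j).choose j) J k :=
        ⟨hJ0, hJt', hmono.mono (Set.Icc_subset_Icc_right (by omega)), hJk, rfl⟩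
      have ih' := ih h'
      have hlt : k t < k (t+1) := hmono ⟨hJt', by omega⟩ ⟨by omega, le_rfl⟩ (by omega)
      have hle : (k t + 1).choose t ≤ (k (t+1)).choose t := Nat.choose_le_choose t (by omega)
      have hpas := Nat.choose_succ_succ (k (t+1)) t
      simp only [Nat.succ_eq_add_one] at hpas
      omega

lemma rep_sum_eq : ∀ {m c J J' : ℕ} {k k' : ℕ → ℕ}, MacaulayRep m c J k → MacaulayRep m c J' k' →
    ∑ j ∈ Finset.Icc J m, (k j + 1).choose (j+1) = ∑ j ∈ Finset.Icc J' m, (k' j + 1).choose (j+1) := by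
  intro m
  induction m with
  | zero => intro c J J' k k' h _; obtain ⟨h1, h2, _⟩ := h; omega
  | succ t ih =>
    intro c J J' k k' h h'
    obtain ⟨hJ0, hJm, hmono, hJk, hc⟩ := h
    obtain ⟨hJ0', hJm', hmono', hJk', hc'⟩ := h'
    have hmem : t+1 ∈ Finset.Icc J (t+1) := Finset.mem_Icc.mpr ⟨hJm, le_rfl⟩
    have hmem' : t+1 ∈ Finset.Icc J' (t+1) := Finset.mem_Icc.mpr ⟨hJm', le_rfl⟩
    have lb : (k (t+1)).choose (t+1) ≤ c :=
      hc ▸ Finset.single_le_sum (f := fun j => (k j).choose j) (fun i _ => Nat.zero_le _) hmem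
    have lb' : (k' (t+1)).choose (t+1) ≤ c :=
      hc' ▸ Finset.single_le_sum (f := fun j => (k' j).choose j) (fun i _ => Nat.zero_le _) hmem'
    have ub : c < (k (t+1) + 1).choose (t+1) := rep_lt ⟨hJ0, hJm, hmono, hJk, hc⟩
    have ub' : c < (k' (t+1) + 1).choose (t+1) := rep_lt ⟨hJ0', hJm', hmono', hJk', hc'⟩
    have htop : k (t+1) = k' (t+1) := by
      rcases Nat.lt_trichotomy (k (t+1)) (k' (t+1)) with hlt | he | hgt
      · have := Nat.choose_le_choose (t+1) (show k (t+1) + 1 ≤ k' (t+1) by omega); omega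
      · exact he
      · have := Nat.choose_le_choose (t+1) (show k' (t+1) + 1 ≤ k (t+1) by omega); omega
    by_cases hJt : J = t+1 <;> by_cases hJt' : J' = t+1
    · subst hJt; subst hJt'
      rw [Finset.Icc_self, Finset.sum_singleton, Finset.sum_singleton, htop]
    · exfalso
      subst hJt
      rw [Finset.Icc_self, Finset.sum_singleton] at hc
      rw [Finset.sum_Icc_succ_top (show J' ≤ t+1 by omega)] at hc'
      have hposmem : J' ∈ Finset.Icc J' t := Finset.mem_Icc.mpr ⟨le_rfl, by omega⟩
      have hpos : 0 < ∑ j ∈ Finset.Icc J' t, (k' j).choose j :=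
        lt_of_lt_of_le (Nat.choose_pos hJk') (Finset.single_le_sum (f := fun j => (k' j).choose j) (fun i _ => Nat.zero_le _) hposmem)
      rw [htop] at hc
      omega
    · exfalso
      subst hJt'
      rw [Finset.Icc_self, Finset.sum_singleton] at hc'
      rw [Finset.sum_Icc_succ_top (show J ≤ t+1 by omega)] at hc
      have hposmem : J ∈ Finset.Icc J t := Finset.mem_Icc.mpr ⟨le_rfl, by omega⟩
      have hpos : 0 < ∑ j ∈ Finset.Icc J t, (k j).choose j :=
        lt_of_lt_of_le (Nat.choose_pos hJk) (Finset.single_le_sum (f := fun j => (k j).choose j) (fun i _ => Nat.zero_le _) hposmem)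
      rw [htop] at hc
      omega
    · rw [Finset.sum_Icc_succ_top (show J ≤ t+1 by omega)] at hc
      rw [Finset.sum_Icc_succ_top (show J' ≤ t+1 by omega)] at hc'
      have hceq : ∑ j ∈ Finset.Icc J t, (k j).choose j = ∑ j ∈ Finset.Icc J' t, (k' j).choose j := by
        rw [htop] at hc; omega
      have r1 : MacaulayRep t (∑ j ∈ Finset.Icc J t, (k j).choose j) J k :=
        ⟨hJ0, by omega, hmono.mono (Set.Icc_subset_Icc_right (by omega)), hJk, rfl⟩
      have r2 : MacaulayRep t (∑ j ∈ Finset.Icc J t, (k j).choose j) J' k' :=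
        ⟨hJ0', by omega, hmono'.mono (Set.Icc_subset_Icc_right (by omega)), hJk', hceq⟩
      have hIH := ih r1 r2
      rw [Finset.sum_Icc_succ_top (show J ≤ t+1 by omega),
          Finset.sum_Icc_succ_top (show J' ≤ t+1 by omega), hIH, htop]

lemma mac_H1 (n : ℕ) (hn : 2 ≤ n) :
    ∀ m, 1 ≤ m → (∑ j ∈ Finset.Icc 2 m, (j + n - 2).choose j) + n = (m + n - 1).choose m := by
  intro m hm
  induction m with
  | zero => omega
  | succ t ih =>
    by_cases ht : t = 0
    · subst ht
      rw [show Finset.Icc 2 1 = ∅ from rfl]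
      simp [show 1 + n - 1 = n by omega, Nat.choose_one_right]
    · have ht1 : 1 ≤ t := by omega
      have ih' := ih ht1
      rw [Finset.sum_Icc_succ_top (show 2 ≤ t + 1 by omega)]
      have hpas := Nat.choose_succ_succ (t + n - 1) t
      simp only [Nat.succ_eq_add_one] at hpas
      rw [show t + 1 + n - 1 = (t + n - 1) + 1 by omega, hpas,
          show t + 1 + n - 2 = t + n - 1 by omega]
      omega

lemma mac_H2 (n : ℕ) (hn : 2 ≤ n) :
    ∀ m, 1 ≤ m →
      (∑ j ∈ Finset.Icc 2 m, (j + n - 1).choose (j + 1)) + (n + n.choose 2) = (m + n).choose (m + 1) := by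
  intro m hm
  induction m with
  | zero => omega
  | succ t ih =>
    by_cases ht : t = 0
    · subst ht
      rw [show Finset.Icc 2 1 = ∅ from rfl]
      have hpas := Nat.choose_succ_succ n 1
      simp only [Nat.succ_eq_add_one] at hpas
      norm_num at hpas
      rw [show 0 + 1 + n = n + 1 by omega, show 0 + 1 + 1 = 2 by omega]
      simp
      omega
    · have ht1 : 1 ≤ t := by omega
      have ih' := ih ht1
      rw [Finset.sum_Icc_succ_top (show 2 ≤ t + 1 by omega)]
      have hpas := Nat.choose_succ_succ (t + n) (t + 1)
      simp only [Nat.succ_eq_add_one] at hpas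
      rw [show t + 1 + n - 1 = t + n by omega, show t + 1 + n = (t + n) + 1 by omega, hpas]
      omega

lemma mac_prod (n : ℕ) : ∀ P, P ≤ n →
    (n - P + 1).choose 2 + n * P = (n + n.choose 2) + P.choose 2 := by
  intro P
  induction P with
  | zero =>
    intro _
    have hpas := Nat.choose_succ_succ n 1
    simp only [Nat.succ_eq_add_one] at hpas
    simp [hpas, Nat.choose_one_right]
  | succ p ih =>
    intro hpn
    have ih' := ih (by omega)
    have h1 := Nat.choose_succ_succ (n - p - 1) 1
    have h2 := Nat.choose_succ_succ p 1
    simp only [Nat.succ_eq_add_one, Nat.choose_one_right] at h1 h2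
    norm_num at h1 h2
    rw [show n - (p + 1) + 1 = (n - p - 1) + 1 by omega, h1,
        show n * (p + 1) = n * p + n by ring]
    rw [show n - p + 1 = (n - p - 1) + 1 + 1 by omega] at ih'
    have h3 := Nat.choose_succ_succ ((n - p - 1) + 1) 1
    simp only [Nat.succ_eq_add_one, Nat.choose_one_right] at h3
    norm_num at h3
    rw [h3, h1] at ih'
    rw [h2]
    obtain ⟨q, hq⟩ : ∃ q, n * p = q := ⟨_, rfl⟩
    rw [hq] at ih' ⊢
    omega


/-- For `P < n` and `m ≥ 1`, the Macaulay operator satisfies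
`(D_m − P)^{<m>} = D_{m+1} − (nP − P(P−1)/2)`, where `D_k = C(k+n-1, k)`. -/
theorem macaulay_op_Dm_sub_P (n m P y : ℕ) (hP : P < n) (hm : 1 ≤ m)
    (hstep : MacaulayStep m ((m + n - 1).choose m - P) y) :
    y = (m + 1 + n - 1).choose (m + 1) - (n * P - P * (P - 1) / 2) := by
  obtain ⟨J, k, hrep, hy⟩ := hstep
  have hn : 1 ≤ n := by omega
  rcases Nat.eq_zero_or_pos P with hP0 | hPpos
  · subst hP0
    have hrep' : MacaulayRep m ((m + n - 1).choose m - 0) m (fun _ => m + n - 1) := by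
      refine ⟨by omega, le_rfl, ?_, show m ≤ m + n - 1 by omega, ?_⟩
      · intro x hx z hz hxz
        simp only [Set.mem_Icc] at hx hz
        omega
      · rw [Finset.Icc_self, Finset.sum_singleton, Nat.sub_zero]
    have heq := rep_sum_eq hrep hrep'
    rw [hy, heq, Finset.Icc_self, Finset.sum_singleton]
    simp only [Nat.mul_zero, Nat.zero_mul, Nat.zero_sub, Nat.sub_zero]
    rw [show m + 1 + n - 1 = m + n - 1 + 1 by omega]
  · have hn2 : 2 ≤ n := by omega
    set kf : ℕ → ℕ := fun j => if j = 1 then n - P else j + n - 2 with hkf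
    have h1 := mac_H1 n hn2 m hm
    have hCn : n ≤ (m + n - 1).choose m := by omega
    have hicc : Finset.Icc 1 m = insert 1 (Finset.Icc 2 m) := by
      ext x; simp only [Finset.mem_Icc, Finset.mem_insert]; omega
    have hnot : 1 ∉ Finset.Icc 2 m := by simp
    have hrep' : MacaulayRep m ((m + n - 1).choose m - P) 1 kf := by
      refine ⟨one_pos, hm, ?_, ?_, ?_⟩
      · intro x hx z hz hxz
        simp only [Set.mem_Icc] at hx hz
        simp only [hkf]
        split_ifs <;> omega
      · simp only [hkf, if_pos rfl]; omega
      · rw [hicc, Finset.sum_insert hnot]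
        have hcongr : ∑ j ∈ Finset.Icc 2 m, (kf j).choose j
            = ∑ j ∈ Finset.Icc 2 m, (j + n - 2).choose j := by
          refine Finset.sum_congr rfl fun j hj => ?_
          simp only [Finset.mem_Icc] at hj
          simp only [hkf, if_neg (show j ≠ 1 by omega)]
        rw [hcongr]
        simp only [hkf, if_pos rfl, Nat.choose_one_right]
        omega
    have heq := rep_sum_eq hrep hrep'
    rw [hy, heq, hicc, Finset.sum_insert hnot]
    have hcongr2 : ∑ j ∈ Finset.Icc 2 m, (kf j + 1).choose (j + 1)
        = ∑ j ∈ Finset.Icc 2 m, (j + n - 1).choose (j + 1) := by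
      refine Finset.sum_congr rfl fun j hj => ?_
      simp only [Finset.mem_Icc] at hj
      simp only [hkf, if_neg (show j ≠ 1 by omega)]
      rw [show j + n - 2 + 1 = j + n - 1 by omega]
    rw [hcongr2]
    simp only [hkf, if_pos rfl]
    rw [show (1:ℕ) + 1 = 2 from rfl]
    have h2 := mac_H2 n hn2 m hm
    have hp := mac_prod n P (le_of_lt hP)
    have hd : P * (P - 1) / 2 = P.choose 2 := (Nat.choose_two_right P).symm
    rw [hd, show m + 1 + n - 1 = m + n by omega]
    have hle1 : P.choose 2 ≤ P * (P - 1) := by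
      rw [Nat.choose_two_right]; exact Nat.div_le_self _ _
    have hle2 : P * (P - 1) ≤ P * n := Nat.mul_le_mul_left P (by omega)
    have hle : P.choose 2 ≤ n * P := by rw [Nat.mul_comm]; omega
    obtain ⟨q, hq⟩ : ∃ q, n * P = q := ⟨_, rfl⟩
    rw [hq] at hp hle ⊢
    omega
end

section
/- For all m ≥ 1 and d ≥ 0: iterating the Macaulay operator d times on D_m − 1 gives [[(D_m − 1)^{<m>}]^{<m+1>} ⋯]^{<m+d-1>} = D_{m+d} − D_d, where D_k = C(k+n-1,k). -/
lemma macaulay_k_ge {s c J : ℕ} {k : ℕ → ℕ} (h : MacaulayRep s c J k) :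
    ∀ j, J ≤ j → j ≤ s → j ≤ k j := by
  obtain ⟨hJ, hJs, hmono, hkJ, _⟩ := h
  intro j hJj
  induction j, hJj using Nat.le_induction with
  | base => intro _; exact hkJ
  | succ j hj ih =>
    intro hjs
    have h1 : k j < k (j + 1) :=
      hmono (Set.mem_Icc.mpr ⟨hj, by omega⟩) (Set.mem_Icc.mpr ⟨by omega, hjs⟩) (Nat.lt_succ_self j)
    have h2 := ih (by omega)
    omega

lemma macaulay_rep_pos {s c J : ℕ} {k : ℕ → ℕ} (h : MacaulayRep s c J k) : 0 < c := by
  have hk := macaulay_k_ge h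
  obtain ⟨hJ, hJs, _, _, hc⟩ := h
  rw [hc]
  apply Finset.sum_pos
  · intro j hj
    rw [Finset.mem_Icc] at hj
    exact Nat.choose_pos (hk j hj.1 hj.2)
  · exact Finset.nonempty_Icc.mpr hJs

lemma macaulay_rep_restrict {s c J : ℕ} {k : ℕ → ℕ} (h : MacaulayRep (s + 1) c J k)
    (hJs : J ≤ s) :
    MacaulayRep s (∑ j ∈ Finset.Icc J s, (k j).choose j) J k ∧
      c = (∑ j ∈ Finset.Icc J s, (k j).choose j) + (k (s + 1)).choose (s + 1) := by
  obtain ⟨hJ, _, hmono, hkJ, hc⟩ := h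
  refine ⟨⟨hJ, hJs, hmono.mono (Set.Icc_subset_Icc_right (Nat.le_succ s)), hkJ, rfl⟩, ?_⟩
  rw [hc, ← Finset.Ico_add_one_right_eq_Icc, Finset.sum_Ico_succ_top (by omega), Finset.Ico_add_one_right_eq_Icc]

lemma macaulay_rep_lt {s c J : ℕ} {k : ℕ → ℕ} (h : MacaulayRep s c J k) :
    c < (k s + 1).choose s := by
  induction s generalizing c J with
  | zero => obtain ⟨h1, h2, _⟩ := h; omega
  | succ s ih =>
    have hks : s + 1 ≤ k (s + 1) := macaulay_k_ge h (s + 1) h.2.1 le_rfl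
    by_cases hJe : J = s + 1
    · obtain ⟨hJ, hJs, hmono, hkJ, hc⟩ := h
      subst hJe
      rw [hc, Finset.Icc_self, Finset.sum_singleton]
      rw [Nat.choose_succ_succ]
      have : 0 < (k (s + 1)).choose s := Nat.choose_pos (by omega)
      simp only [Nat.succ_eq_add_one]
      omega
    · have hJs : J ≤ s := by have := h.2.1; omega
      obtain ⟨hr, hsplit⟩ := macaulay_rep_restrict h hJs
      have hlt := ih hr
      have hmono1 : k s < k (s + 1) :=
        h.2.2.1 (Set.mem_Icc.mpr ⟨hJs, by omega⟩) (Set.mem_Icc.mpr ⟨h.2.1, le_rfl⟩)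
          (Nat.lt_succ_self s)
      have h2 : (k s + 1).choose s ≤ (k (s + 1)).choose s := Nat.choose_le_choose s (by omega)
      have h3 : (k (s + 1) + 1).choose (s + 1)
          = (k (s + 1)).choose s + (k (s + 1)).choose (s + 1) := by
        rw [Nat.choose_succ_succ]
      omega

lemma macaulay_top_eq {s c J J' : ℕ} {k k' : ℕ → ℕ} (h : MacaulayRep s c J k)
    (h' : MacaulayRep s c J' k') : k s = k' s := by
  have l1 := macaulay_rep_lt h
  have l2 := macaulay_rep_lt h'
  have g1 : (k s).choose s ≤ c := by
    rw [h.2.2.2.2]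
    exact Finset.single_le_sum (f := fun j => (k j).choose j) (fun _ _ => Nat.zero_le _)
      (Finset.mem_Icc.mpr ⟨h.2.1, le_rfl⟩)
  have g2 : (k' s).choose s ≤ c := by
    rw [h'.2.2.2.2]
    exact Finset.single_le_sum (f := fun j => (k' j).choose j) (fun _ _ => Nat.zero_le _)
      (Finset.mem_Icc.mpr ⟨h'.2.1, le_rfl⟩)
  rcases lt_trichotomy (k s) (k' s) with hlt | heq | hgt
  · have := Nat.choose_le_choose s (show k s + 1 ≤ k' s by omega)
    omega
  · exact heq
  · have := Nat.choose_le_choose s (show k' s + 1 ≤ k s by omega)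
    omega

lemma macaulay_rep_unique {s c J J' : ℕ} {k k' : ℕ → ℕ} (h : MacaulayRep s c J k)
    (h' : MacaulayRep s c J' k') : J = J' ∧ ∀ j, J ≤ j → j ≤ s → k j = k' j := by
  induction s generalizing c J J' with
  | zero => obtain ⟨h1, h2, _⟩ := h; omega
  | succ s ih =>
    have htop := macaulay_top_eq h h'
    by_cases e1 : J = s + 1 <;> by_cases e2 : J' = s + 1
    · refine ⟨by omega, ?_⟩
      intro j h1 h2
      have : j = s + 1 := by omega
      subst this; exact htop
    · exfalso
      obtain ⟨hr', hsplit'⟩ := macaulay_rep_restrict h' (by have := h'.2.1; omega)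
      have hpos := macaulay_rep_pos hr'
      have hc : c = (k (s + 1)).choose (s + 1) := by
        rw [h.2.2.2.2, e1, Finset.Icc_self, Finset.sum_singleton]
      rw [htop] at hc
      omega
    · exfalso
      obtain ⟨hr, hsplit⟩ := macaulay_rep_restrict h (by have := h.2.1; omega)
      have hpos := macaulay_rep_pos hr
      have hc : c = (k' (s + 1)).choose (s + 1) := by
        rw [h'.2.2.2.2, e2, Finset.Icc_self, Finset.sum_singleton]
      rw [← htop] at hc
      omega
    · obtain ⟨hr, hsplit⟩ := macaulay_rep_restrict h (by have := h.2.1; omega)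
      obtain ⟨hr', hsplit'⟩ := macaulay_rep_restrict h' (by have := h'.2.1; omega)
      have heq : (∑ j ∈ Finset.Icc J s, (k j).choose j)
          = ∑ j ∈ Finset.Icc J' s, (k' j).choose j := by
        rw [htop] at hsplit; omega
      rw [heq] at hr
      obtain ⟨hJJ, hkk⟩ := ih hr hr'
      refine ⟨hJJ, ?_⟩
      intro j h1 h2
      by_cases hj : j = s + 1
      · subst hj; exact htop
      · exact hkk j h1 (by omega)

lemma macaulay_hockey (p t : ℕ) :
    ∑ j ∈ Finset.Icc 0 t, (p + j).choose j = (p + t + 1).choose t := by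
  induction t with
  | zero => simp
  | succ t ih =>
    rw [← Finset.Ico_add_one_right_eq_Icc, Finset.sum_Ico_succ_top (by omega), Finset.Ico_add_one_right_eq_Icc, ih]
    rw [show p + (t + 1) + 1 = (p + t + 1) + 1 by ring, Nat.choose_succ_succ]
    simp only [Nat.succ_eq_add_one]
    ring_nf

lemma macaulay_icc_split (f : ℕ → ℕ) {a b c : ℕ} (h1 : a ≤ b + 1) (h2 : b ≤ c) :
    ∑ j ∈ Finset.Icc a b, f j + ∑ j ∈ Finset.Icc (b + 1) c, f j
      = ∑ j ∈ Finset.Icc a c, f j := by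
  rw [← Finset.Ico_add_one_right_eq_Icc, ← Finset.Ico_add_one_right_eq_Icc, ← Finset.Ico_add_one_right_eq_Icc]
  exact Finset.sum_Ico_consecutive f h1 (by omega)

/-- For `m ≥ 1` and `d ≥ 0`, iterating the Macaulay operator `d` times on `D_m − 1`
in degrees `m, m+1, …, m+d-1` yields `D_{m+d} − D_d`, where `D_k = C(k+n-1, k)`. -/
theorem macaulay_iterate_Dm_sub_one (n m d : ℕ) (hm : 1 ≤ m) (a : ℕ → ℕ)
    (ha0 : a 0 = (m + n - 1).choose m - 1)
    (hstep : ∀ i < d, MacaulayStep (m + i) (a i) (a (i + 1))) :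
    a d = (m + d + n - 1).choose (m + d) - (d + n - 1).choose d := by
  rcases Nat.lt_or_ge n 2 with hn | hn
  · -- n ≤ 1
    rcases Nat.eq_zero_or_pos d with rfl | hd
    · simpa using ha0
    · exfalso
      obtain ⟨J, k, hrep, -⟩ := hstep 0 hd
      have hpos := macaulay_rep_pos hrep
      have h0 : a 0 = 0 := by
        rw [ha0]
        interval_cases n
        · have : (m + 0 - 1).choose m = 0 := Nat.choose_eq_zero_of_lt (by omega)
          omega
        · have : (m + 1 - 1).choose m = 1 := by
            rw [show m + 1 - 1 = m by omega, Nat.choose_self]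
          omega
      rw [h0] at hpos; omega
  · obtain ⟨p, rfl⟩ : ∃ p, n = p + 2 := ⟨n - 2, by omega⟩
    have key : ∀ i, i ≤ d → a i = ∑ j ∈ Finset.Icc (i + 1) (m + i), (p + j).choose j := by
      intro i
      induction i with
      | zero =>
        intro _
        simp only [Nat.zero_add, Nat.add_zero]
        have h1 := macaulay_hockey p m
        have hsp : (∑ j ∈ Finset.Icc 0 0, (p + j).choose j)
            + ∑ j ∈ Finset.Icc 1 m, (p + j).choose j
            = ∑ j ∈ Finset.Icc 0 m, (p + j).choose j :=
          macaulay_icc_split _ (by omega) (by omega)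
        simp only [Finset.Icc_self, Finset.sum_singleton, Nat.add_zero, Nat.choose_zero_right]
          at hsp
        rw [ha0, show m + (p + 2) - 1 = p + m + 1 by omega]
        omega
      | succ i ih =>
        intro hi
        have hai := ih (by omega)
        obtain ⟨J, k, hrep, hy⟩ := hstep i (by omega)
        have hcan : MacaulayRep (m + i) (a i) (i + 1) (fun j => p + j) := by
          refine ⟨by omega, by omega, ?_, by simp, hai⟩
          intro x _ y _ hxy
          simpa using hxy
        obtain ⟨hJeq, hkeq⟩ := macaulay_rep_unique hrep hcan
        subst hJeq
        rw [hy]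
        have hcongr : ∑ j ∈ Finset.Icc (i + 1) (m + i), (k j + 1).choose (j + 1)
            = ∑ j ∈ Finset.Icc (i + 1) (m + i), (p + j + 1).choose (j + 1) := by
          refine Finset.sum_congr rfl fun j hj => ?_
          rw [Finset.mem_Icc] at hj
          rw [hkeq j hj.1 hj.2]
        rw [hcongr]
        rw [show m + (i + 1) = (m + i) + 1 by omega,
          ← Finset.map_add_right_Icc (i + 1) (m + i) 1, Finset.sum_map]
        refine Finset.sum_congr rfl fun j _ => ?_
        simp [addRightEmbedding_apply, ← add_assoc]
    have hfin := key d le_rfl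
    have h1 := macaulay_hockey p (m + d)
    have h2 := macaulay_hockey p d
    have hsp : (∑ j ∈ Finset.Icc 0 d, (p + j).choose j)
        + ∑ j ∈ Finset.Icc (d + 1) (m + d), (p + j).choose j
        = ∑ j ∈ Finset.Icc 0 (m + d), (p + j).choose j :=
      macaulay_icc_split _ (by omega) (by omega)
    rw [hfin, show m + d + (p + 2) - 1 = p + (m + d) + 1 by omega,
      show d + (p + 2) - 1 = p + d + 1 by omega, ← h1, ← h2]
    omega
end
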